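/- The partial dual distributes over a join: for ribbon graphs P and Q and any A ⊆ E(P ∨ Q), we have (P ∨ Q)^A = P^{E(P) ∩ A} ∨ Q^{E(Q) ∩ A}. -/

import Mathlib

/-!
A combinatorial model of ribbon graphs (cellularly embedded graphs), following
the flag / three-involution (graph-encoded map) presentation.  A ribbon graph
consists of a finite set of flags `flags` inside an ambient type `F`, a finite
set `fverts` of tokens representing isolated (bare) vertices, and three
involutions `s0, s1, s2` of `F` supported on `flags`, with `s0` and `s2`
commuting.  Vertices correspond to orbits of `⟨s1, s2⟩` on flags (plus the bare
vertices), edges to orbits of `⟨s0, s2⟩`, and boundary components to orbits of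
`⟨s0, s1⟩`.  Chmutov's partial dual with respect to an edge subset `A` swaps
the roles of `s0` and `s2` on the flags of `A`.
-/

namespace RibbonPaper

open Function

variable {F : Type*} [DecidableEq F] [Fintype F]

structure RibbonGraph (F : Type*) [DecidableEq F] [Fintype F] where
  flags : Finset F
  fverts : Finset F
  disj : ∀ x ∈ fverts, x ∉ flags
  s0 : Equiv.Perm F
  s1 : Equiv.Perm F
  s2 : Equiv.Perm F
  fix0 : ∀ x ∉ flags, s0 x = x
  fix1 : ∀ x ∉ flags, s1 x = x
  fix2 : ∀ x ∉ flags, s2 x = x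
  inv0 : ∀ x, s0 (s0 x) = x
  inv1 : ∀ x, s1 (s1 x) = x
  inv2 : ∀ x, s2 (s2 x) = x
  comm02 : ∀ x, s0 (s2 x) = s2 (s0 x)

namespace RibbonGraph

attribute [local instance] Classical.propDecidable

/-- An involution supported on `S` preserves `S`. -/
lemma perm_mem_of {p : Equiv.Perm F} {S : Finset F}
    (hfix : ∀ x ∉ S, p x = x) (hinv : ∀ x, p (p x) = x)
    {x : F} (hx : x ∈ S) : p x ∈ S := by
  by_contra hc
  have h1 : p (p x) = p x := hfix _ hc
  rw [hinv x] at h1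
  exact hc (h1 ▸ hx)

/-- The function acting as `v` on `A` and as `u` off `A`. -/
def mixFun (u v : Equiv.Perm F) (A : Finset F) : F → F :=
  fun x => if x ∈ A then v x else u x

lemma involutive_mixFun {u v : Equiv.Perm F} {A : Finset F}
    (hu : ∀ x, u (u x) = x) (hv : ∀ x, v (v x) = x)
    (hA : ∀ x ∈ A, u x ∈ A ∧ v x ∈ A) :
    Function.Involutive (mixFun u v A) := by
  intro x
  by_cases hx : x ∈ A
  · have h1 : v x ∈ A := (hA x hx).2
    simp only [mixFun, if_pos hx, if_pos h1]
    exact hv x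
  · have h1 : u x ∉ A := by
      intro hc
      have h2 : u (u x) ∈ A := (hA _ hc).1
      rw [hu x] at h2
      exact hx h2
    simp only [mixFun, if_neg hx, if_neg h1]
    exact hu x

/-- The permutation acting as `v` on `A` and as `u` off `A` (junk value `u`
if this fails to be an involution). -/
noncomputable def mix (u v : Equiv.Perm F) (A : Finset F) : Equiv.Perm F :=
  if h : Function.Involutive (mixFun u v A) then Function.Involutive.toPerm _ h else u

lemma mix_apply {u v : Equiv.Perm F} {A : Finset F}
    (h : Function.Involutive (mixFun u v A)) (x : F) :
    mix u v A x = mixFun u v A x := by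
  simp only [mix, dif_pos h]
  rfl

/-- `A` is (the set of flags of) a subset of the edge set `E(G)`:
it consists of flags and is a union of `⟨s0, s2⟩`-orbits, i.e. of edges. -/
def IsEdgeSubset (G : RibbonGraph F) (A : Finset F) : Prop :=
  A ⊆ G.flags ∧ ∀ x ∈ A, G.s0 x ∈ A ∧ G.s2 x ∈ A

/-- The partial dual `G^A` of `G` with respect to the edge subset `A`
(Chmutov): the involutions `s0` and `s2` are interchanged on the flags of the
edges of `A`.  (Junk value `G` if `A` is not a union of edges.) -/
noncomputable def partialDual (G : RibbonGraph F) (A : Finset F) : RibbonGraph F :=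
  if h : G.IsEdgeSubset A then
    have h02 : Function.Involutive (mixFun G.s0 G.s2 A) :=
      involutive_mixFun G.inv0 G.inv2 h.2
    have h20 : Function.Involutive (mixFun G.s2 G.s0 A) :=
      involutive_mixFun G.inv2 G.inv0 (fun x hx => ⟨(h.2 x hx).2, (h.2 x hx).1⟩)
    { flags := G.flags
      fverts := G.fverts
      disj := G.disj
      s0 := mix G.s0 G.s2 A
      s1 := G.s1
      s2 := mix G.s2 G.s0 A
      fix0 := by
        intro x hx
        have hxA : x ∉ A := fun hc => hx (h.1 hc)
        rw [mix_apply h02]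
        simp only [mixFun, if_neg hxA]
        exact G.fix0 x hx
      fix1 := G.fix1
      fix2 := by
        intro x hx
        have hxA : x ∉ A := fun hc => hx (h.1 hc)
        rw [mix_apply h20]
        simp only [mixFun, if_neg hxA]
        exact G.fix2 x hx
      inv0 := by
        intro x
        rw [mix_apply h02, mix_apply h02]
        exact h02 x
      inv1 := G.inv1
      inv2 := by
        intro x
        rw [mix_apply h20, mix_apply h20]
        exact h20 x
      comm02 := by
        intro x
        simp only [mix_apply h02, mix_apply h20]
        by_cases hx : x ∈ A
        · have h0 : G.s0 x ∈ A := (h.2 x hx).1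
          have h2 : G.s2 x ∈ A := (h.2 x hx).2
          simp only [mixFun, if_pos hx, if_pos h0, if_pos h2]
          exact (G.comm02 x).symm
        · have h0 : G.s0 x ∉ A := fun hc => hx (by rw [← G.inv0 x]; exact (h.2 _ hc).1)
          have h2 : G.s2 x ∉ A := fun hc => hx (by rw [← G.inv2 x]; exact (h.2 _ hc).2)
          simp only [mixFun, if_neg hx, if_neg h0, if_neg h2]
          exact G.comm02 x }
  else G

/-- The geometric dual `G*`: the roles of `s0` and `s2` (vertices and faces)
are interchanged everywhere. -/
def gdual (G : RibbonGraph F) : RibbonGraph F where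
  flags := G.flags
  fverts := G.fverts
  disj := G.disj
  s0 := G.s2
  s1 := G.s1
  s2 := G.s0
  fix0 := G.fix2
  fix1 := G.fix1
  fix2 := G.fix0
  inv0 := G.inv2
  inv1 := G.inv1
  inv2 := G.inv0
  comm02 := fun x => (G.comm02 x).symm

/-- First return map: the first point of the forward `p`-orbit of `x`
lying in `A` (junk value `x` if there is none). -/
noncomputable def ret (p : Equiv.Perm F) (A : Finset F) (x : F) : F := by
  classical
  exact if h : ∃ k : ℕ, (p ^ k) x ∈ A then (p ^ (Nat.find h)) x else x

/-- The corner pairing of the subgraph induced by the edges of `A`: travel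
around the vertex, skipping flags of deleted edges. -/
noncomputable def indS1fun (G : RibbonGraph F) (A : Finset F) : F → F :=
  fun x => if x ∈ A then ret (G.s1 * G.s2) A (G.s1 x) else x

noncomputable def indS1 (G : RibbonGraph F) (A : Finset F) : Equiv.Perm F :=
  if h : Function.Involutive (indS1fun G A) then Function.Involutive.toPerm _ h else 1

lemma indS1_apply {G : RibbonGraph F} {A : Finset F}
    (h : Function.Involutive (indS1fun G A)) (x : F) :
    indS1 G A x = indS1fun G A x := by
  simp only [indS1, dif_pos h]
  rfl

lemma indS1_apply_junk {G : RibbonGraph F} {A : Finset F}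
    (h : ¬ Function.Involutive (indS1fun G A)) (x : F) :
    indS1 G A x = x := by
  simp only [indS1, dif_neg h]
  rfl

/-- The ribbon subgraph `G|_A` induced by the edge subset `A`: its flags are
those of the edges of `A`, and its vertices are the vertices of `G` incident
with `A`.  (Junk value `G` if `A` is not a union of edges.) -/
noncomputable def induce (G : RibbonGraph F) (A : Finset F) : RibbonGraph F :=
  if h : G.IsEdgeSubset A then
    have h0 : Function.Involutive (mixFun 1 G.s0 A) :=
      involutive_mixFun (fun _ => rfl) G.inv0 (fun x hx => ⟨by simpa using hx, (h.2 x hx).1⟩)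
    have h2 : Function.Involutive (mixFun 1 G.s2 A) :=
      involutive_mixFun (fun _ => rfl) G.inv2 (fun x hx => ⟨by simpa using hx, (h.2 x hx).2⟩)
    { flags := A
      fverts := ∅
      disj := by simp
      s0 := mix 1 G.s0 A
      s1 := indS1 G A
      s2 := mix 1 G.s2 A
      fix0 := by
        intro x hx
        rw [mix_apply h0]
        simp only [mixFun, if_neg hx]
        rfl
      fix1 := by
        intro x hx
        by_cases h' : Function.Involutive (indS1fun G A)
        · rw [indS1_apply h']
          simp only [indS1fun, if_neg hx]
        · exact indS1_apply_junk h' x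
      fix2 := by
        intro x hx
        rw [mix_apply h2]
        simp only [mixFun, if_neg hx]
        rfl
      inv0 := by
        intro x
        rw [mix_apply h0, mix_apply h0]
        exact h0 x
      inv1 := by
        intro x
        by_cases h' : Function.Involutive (indS1fun G A)
        · rw [indS1_apply h', indS1_apply h']
          exact h' x
        · rw [indS1_apply_junk h', indS1_apply_junk h']
      inv2 := by
        intro x
        rw [mix_apply h2, mix_apply h2]
        exact h2 x
      comm02 := by
        intro x
        simp only [mix_apply h0, mix_apply h2]
        by_cases hx : x ∈ A
        · have m0 : G.s0 x ∈ A := (h.2 x hx).1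
          have m2 : G.s2 x ∈ A := (h.2 x hx).2
          simp only [mixFun, if_pos hx, if_pos m0, if_pos m2]
          exact G.comm02 x
        · simp only [mixFun, if_neg hx, Equiv.Perm.one_apply] }
  else G

/-- Two flags are related if some generator maps one to the other. -/
def permRel (gens : Set (Equiv.Perm F)) (a b : F) : Prop := ∃ g ∈ gens, g a = b

/-- The orbit of `x` under the group generated by `gens`. -/
def orbitOf (gens : Set (Equiv.Perm F)) (x : F) : Set F :=
  {y | Relation.EqvGen (permRel gens) x y}

/-- The number of orbits of the group generated by `gens` meeting `S`. -/
noncomputable def countOrbits (gens : Set (Equiv.Perm F)) (S : Set F) : ℕ :=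
  (orbitOf gens '' S).ncard

/-- The number of vertices: orbits of `⟨s1, s2⟩` on the flags, plus bare vertices. -/
noncomputable def numVertices (G : RibbonGraph F) : ℕ :=
  countOrbits {G.s1, G.s2} ↑G.flags + G.fverts.card

/-- The number of edges: orbits of `⟨s0, s2⟩` on the flags. -/
noncomputable def numEdges (G : RibbonGraph F) : ℕ :=
  countOrbits {G.s0, G.s2} ↑G.flags

/-- The number of boundary components: orbits of `⟨s0, s1⟩` on the flags,
plus one for each bare vertex. -/
noncomputable def numBoundary (G : RibbonGraph F) : ℕ :=
  countOrbits {G.s0, G.s1} ↑G.flags + G.fverts.card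

/-- The number of connected components. -/
noncomputable def numComponents (G : RibbonGraph F) : ℕ :=
  countOrbits {G.s0, G.s1, G.s2} ↑G.flags + G.fverts.card

/-- The Euler characteristic `χ(G) = V - E` of the ribbon graph viewed as a
surface with boundary. -/
noncomputable def eulerChar (G : RibbonGraph F) : ℤ :=
  (G.numVertices : ℤ) - (G.numEdges : ℤ)

/-- The Euler genus `γ(G) = 2c(G) - χ(G) - b(G)`, additive over components. -/
noncomputable def eulerGenus (G : RibbonGraph F) : ℤ :=
  2 * (G.numComponents : ℤ) - G.eulerChar - (G.numBoundary : ℤ)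

def Connected (G : RibbonGraph F) : Prop := G.numComponents = 1

/-- `G` is orientable iff its flags admit a proper 2-colouring with respect to
all three involutions. -/
def Orientable (G : RibbonGraph F) : Prop :=
  ∃ f : F → Bool, ∀ x ∈ G.flags,
    f (G.s0 x) ≠ f x ∧ f (G.s1 x) ≠ f x ∧ f (G.s2 x) ≠ f x

/-- A plane ribbon graph: connected with Euler genus `0`. -/
def IsPlane (G : RibbonGraph F) : Prop := G.Connected ∧ G.eulerGenus = 0

/-- An `ℝP²` ribbon graph: connected, non-orientable, Euler genus `1`. -/
def IsRP2 (G : RibbonGraph F) : Prop :=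
  G.Connected ∧ ¬ G.Orientable ∧ G.eulerGenus = 1

noncomputable def toFin (s : Set F) : Finset F := (Set.toFinite s).toFinset

/-- The connected component of `G` containing the flag `x`, as a ribbon graph. -/
noncomputable def componentOf (G : RibbonGraph F) (x : F) : RibbonGraph F :=
  G.induce (toFin (orbitOf {G.s0, G.s1, G.s2} x))

/-- The vertex of `G` containing the flag `x`, as a set of flags. -/
def vertexOrbit (G : RibbonGraph F) (x : F) : Set F := orbitOf {G.s1, G.s2} x

def IsVertexOrbit (G : RibbonGraph F) (v : Set F) : Prop :=
  ∃ x ∈ G.flags, v = G.vertexOrbit x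

/-- `v` is a vertex of `G`: either a `⟨s1,s2⟩`-orbit of flags or a bare vertex. -/
def IsVertex (G : RibbonGraph F) (v : Set F) : Prop :=
  G.IsVertexOrbit v ∨ ∃ t ∈ G.fverts, v = {t}

/-- The vertices of `G` shared by the subgraphs `P` and `Q`. -/
def sharedVerts (G P Q : RibbonGraph F) : Set (Set F) :=
  {v | G.IsVertexOrbit v ∧ (v ∩ ↑P.flags).Nonempty ∧ (v ∩ ↑Q.flags).Nonempty}

/-- `H` is the ribbon subgraph of `G` induced by its edges. -/
def IsRibbonSubgraph (H G : RibbonGraph F) : Prop :=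
  G.IsEdgeSubset H.flags ∧ H = G.induce H.flags

/-- `G = P ⊕ₙ Q` is an `n`-sum: `P` and `Q` are non-trivial connected ribbon
subgraphs with `G = P ∪ Q`, sharing no edges and exactly `n` vertices. -/
def IsNSum (G P Q : RibbonGraph F) (n : ℕ) : Prop :=
  P.IsRibbonSubgraph G ∧ Q.IsRibbonSubgraph G ∧
  P.Connected ∧ Q.Connected ∧ P.flags.Nonempty ∧ Q.flags.Nonempty ∧
  P.flags ∪ Q.flags = G.flags ∧ P.flags ∩ Q.flags = ∅ ∧
  (G.sharedVerts P Q).ncard = n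

/-- `H` is a connected component of `G|_A`. -/
def SideA (G : RibbonGraph F) (A : Finset F) (H : RibbonGraph F) : Prop :=
  ∃ x ∈ A, H = (G.induce A).componentOf x

/-- `H` is a connected component of `G|_{Aᶜ}`. -/
def SideB (G : RibbonGraph F) (A : Finset F) (H : RibbonGraph F) : Prop :=
  SideA G (G.flags \ A) H

/-- `G` is written as the sequence of 1-sums `H 0 ⊕ H 1 ⊕ ⋯ ⊕ H (l-1)`
(partial sums `S`), where the summands are the components of `G|_A` and
`G|_{Aᶜ}`, every flag of `G` is covered, and each 1-sum involves a component
of `G|_A` and a component of `G|_{Aᶜ}`. -/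
def BisepSeq (G : RibbonGraph F) (A : Finset F) (l : ℕ)
    (H S : ℕ → RibbonGraph F) : Prop :=
  0 < l ∧ S 0 = H 0 ∧ S (l - 1) = G ∧
  (∀ i < l, SideA G A (H i) ∨ SideB G A (H i)) ∧
  (∀ x ∈ G.flags, ∃ i < l, x ∈ (H i).flags) ∧
  ∀ i, i + 1 < l →
    IsNSum (S (i + 1)) (S i) (H (i + 1)) 1 ∧
    ∃ j ≤ i, ((SideA G A (H (i + 1)) ∧ SideB G A (H j)) ∨
              (SideB G A (H (i + 1)) ∧ SideA G A (H j))) ∧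
      G.sharedVerts (S i) (H (i + 1)) = G.sharedVerts (H j) (H (i + 1))

/-- `A` defines a biseparation of `G` (Definition 3.2): `A` is trivial, or `G`
is a sequence of 1-sums each involving a component of `G|_A` and one of
`G|_{Aᶜ}`. -/
def DefinesBiseparation (G : RibbonGraph F) (A : Finset F) : Prop :=
  A = G.flags ∨ A = ∅ ∨ ∃ l H S, BisepSeq G A l H S

/-- The component of `G|_A` or of `G|_{Aᶜ}` containing the flag `x`. -/
noncomputable def sideComp (G : RibbonGraph F) (A : Finset F) (x : F) : RibbonGraph F :=
  if x ∈ A then (G.induce A).componentOf x else (G.induce (G.flags \ A)).componentOf x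

/-- `A` defines a plane-biseparation: a biseparation in which every component
of `G|_A` and of `G|_{Aᶜ}` is plane. -/
def PlaneBiseparation (G : RibbonGraph F) (A : Finset F) : Prop :=
  G.DefinesBiseparation A ∧ ∀ x ∈ G.flags, (G.sideComp A x).IsPlane

/-- `A` defines an `ℝP²`-biseparation: a biseparation in which exactly one
component of `G|_A` or of `G|_{Aᶜ}` is an `ℝP²` ribbon graph and all other
components are plane. -/
def RP2Biseparation (G : RibbonGraph F) (A : Finset F) : Prop :=
  G.DefinesBiseparation A ∧
  (∃ x ∈ G.flags, (G.sideComp A x).IsRP2 ∧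
    ∀ y ∈ G.flags, (G.sideComp A y).IsRP2 → G.sideComp A y = G.sideComp A x) ∧
  ∀ y ∈ G.flags, ¬ (G.sideComp A y).IsRP2 → (G.sideComp A y).IsPlane

/-- `G = P ∨ Q` is a join: a 1-sum at a vertex `v` such that the flags of `P`
at `v` form an arc (an interval of the cyclic order around `v`). -/
def IsJoin (G P Q : RibbonGraph F) : Prop :=
  IsNSum G P Q 1 ∧ ∃ v ∈ G.sharedVerts P Q,
    ({x | x ∈ v ∩ ↑P.flags ∧ (G.s2 * G.s1) x ∉ v ∩ ↑P.flags} : Set F).ncard ≤ 1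

/-- `G = H 0 ∨ H 1 ∨ ⋯ ∨ H (l-1)` is a (left-associated) sequence of joins. -/
def JoinSeq (G : RibbonGraph F) (l : ℕ) (H : ℕ → RibbonGraph F) : Prop :=
  0 < l ∧ ∃ S : ℕ → RibbonGraph F, S 0 = H 0 ∧ S (l - 1) = G ∧
    ∀ i, i + 1 < l → IsJoin (S (i + 1)) (S i) (H (i + 1))

/-- `A` defines a join-biseparation of `G`: `G = H_1 ∨ ⋯ ∨ H_l` with `A` the
union of the edge sets of some of the `H_i`. -/
def JoinBiseparation (G : RibbonGraph F) (A : Finset F) : Prop :=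
  ∃ l H, JoinSeq G l H ∧ ∃ I : Set ℕ,
    (↑A : Set F) = ⋃ i ∈ {j | j < l ∧ j ∈ I}, (((H i).flags : Set F))

/-- A join-biseparation in which every join summand is plane. -/
def PlaneJoinBiseparation (G : RibbonGraph F) (A : Finset F) : Prop :=
  ∃ l H, JoinSeq G l H ∧ (∀ i < l, (H i).IsPlane) ∧ ∃ I : Set ℕ,
    (↑A : Set F) = ⋃ i ∈ {j | j < l ∧ j ∈ I}, (((H i).flags : Set F))

/-- A join-biseparation in which exactly one join summand is `ℝP²`
and all the others are plane. -/
def RP2JoinBiseparation (G : RibbonGraph F) (A : Finset F) : Prop :=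
  ∃ l H, JoinSeq G l H ∧
    (∃ i < l, (H i).IsRP2 ∧ ∀ j < l, j ≠ i → (H j).IsPlane) ∧ ∃ I : Set ℕ,
    (↑A : Set F) = ⋃ i ∈ {j | j < l ∧ j ∈ I}, (((H i).flags : Set F))

/-- `G` is prime: it is not a join of two (non-trivial) ribbon graphs. -/
def IsPrime (G : RibbonGraph F) : Prop := ¬ ∃ P Q : RibbonGraph F, IsJoin G P Q

/-- `H` is a join-summand of `G`. -/
def IsJoinSummand (G H : RibbonGraph F) : Prop :=
  ∃ l Hs, JoinSeq G l Hs ∧ ∃ i < l, Hs i = H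

/-- `B` is obtained from `A` by toggling a join-summand of `G`, i.e. by taking
the symmetric difference with the edge set of a join-summand. -/
def ToggleStep (G : RibbonGraph F) (A B : Finset F) : Prop :=
  ∃ H, G.IsJoinSummand H ∧ B = symmDiff A H.flags

/-- The disjoint union of two ribbon graphs on disjoint supports.
(Junk value `P` if the supports are not disjoint.) -/
noncomputable def disjUnion (P Q : RibbonGraph F) : RibbonGraph F :=
  if h : Disjoint (P.flags ∪ P.fverts) (Q.flags ∪ Q.fverts) then
    have hPQ : ∀ x ∈ P.flags, x ∉ Q.flags := fun x hx hc =>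
      (Finset.disjoint_left.mp h (Finset.mem_union_left _ hx)) (Finset.mem_union_left _ hc)
    have key : ∀ (p q : Equiv.Perm F), (∀ x ∉ P.flags, p x = x) → (∀ x, p (p x) = x) →
        (∀ x ∉ Q.flags, q x = x) → (∀ x, q (q x) = x) →
        Function.Involutive (mixFun q p P.flags) := fun p q hp hp2 hq hq2 =>
      involutive_mixFun hq2 hp2 (fun x hx =>
        ⟨by rw [hq x (hPQ x hx)]; exact hx, perm_mem_of hp hp2 hx⟩)
    have h0 : Function.Involutive (mixFun Q.s0 P.s0 P.flags) :=
      key P.s0 Q.s0 P.fix0 P.inv0 Q.fix0 Q.inv0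
    have h1 : Function.Involutive (mixFun Q.s1 P.s1 P.flags) :=
      key P.s1 Q.s1 P.fix1 P.inv1 Q.fix1 Q.inv1
    have h2 : Function.Involutive (mixFun Q.s2 P.s2 P.flags) :=
      key P.s2 Q.s2 P.fix2 P.inv2 Q.fix2 Q.inv2
    { flags := P.flags ∪ Q.flags
      fverts := P.fverts ∪ Q.fverts
      disj := by
        intro x hx hc
        rcases Finset.mem_union.mp hx with hxP | hxQ
        · rcases Finset.mem_union.mp hc with hcP | hcQ
          · exact P.disj x hxP hcP
          · exact (Finset.disjoint_left.mp h (Finset.mem_union_right _ hxP))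
              (Finset.mem_union_left _ hcQ)
        · rcases Finset.mem_union.mp hc with hcP | hcQ
          · exact (Finset.disjoint_left.mp h (Finset.mem_union_left _ hcP))
              (Finset.mem_union_right _ hxQ)
          · exact Q.disj x hxQ hcQ
      s0 := mix Q.s0 P.s0 P.flags
      s1 := mix Q.s1 P.s1 P.flags
      s2 := mix Q.s2 P.s2 P.flags
      fix0 := by
        intro x hx
        have hxP : x ∉ P.flags := fun hc => hx (Finset.mem_union_left _ hc)
        have hxQ : x ∉ Q.flags := fun hc => hx (Finset.mem_union_right _ hc)
        rw [mix_apply h0]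
        simp only [mixFun, if_neg hxP]
        exact Q.fix0 x hxQ
      fix1 := by
        intro x hx
        have hxP : x ∉ P.flags := fun hc => hx (Finset.mem_union_left _ hc)
        have hxQ : x ∉ Q.flags := fun hc => hx (Finset.mem_union_right _ hc)
        rw [mix_apply h1]
        simp only [mixFun, if_neg hxP]
        exact Q.fix1 x hxQ
      fix2 := by
        intro x hx
        have hxP : x ∉ P.flags := fun hc => hx (Finset.mem_union_left _ hc)
        have hxQ : x ∉ Q.flags := fun hc => hx (Finset.mem_union_right _ hc)
        rw [mix_apply h2]
        simp only [mixFun, if_neg hxP]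
        exact Q.fix2 x hxQ
      inv0 := by
        intro x
        rw [mix_apply h0, mix_apply h0]
        exact h0 x
      inv1 := by
        intro x
        rw [mix_apply h1, mix_apply h1]
        exact h1 x
      inv2 := by
        intro x
        rw [mix_apply h2, mix_apply h2]
        exact h2 x
      comm02 := by
        intro x
        simp only [mix_apply h0, mix_apply h2]
        by_cases hx : x ∈ P.flags
        · have m2 : P.s2 x ∈ P.flags := perm_mem_of P.fix2 P.inv2 hx
          have m0 : P.s0 x ∈ P.flags := perm_mem_of P.fix0 P.inv0 hx
          simp only [mixFun, if_pos hx, if_pos m2, if_pos m0]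
          exact P.comm02 x
        · have m2 : Q.s2 x ∉ P.flags := by
            by_cases hq : x ∈ Q.flags
            · intro hc
              exact hPQ _ hc (perm_mem_of Q.fix2 Q.inv2 hq)
            · rw [Q.fix2 x hq]; exact hx
          have m0 : Q.s0 x ∉ P.flags := by
            by_cases hq : x ∈ Q.flags
            · intro hc
              exact hPQ _ hc (perm_mem_of Q.fix0 Q.inv0 hq)
            · rw [Q.fix0 x hq]; exact hx
          simp only [mixFun, if_neg hx, if_neg m2, if_neg m0]
          exact Q.comm02 x }
  else P


/-! ### Auxiliary lemmas for `partialDual_join` -/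

private lemma rg_ext {G H : RibbonGraph F} (h1 : G.flags = H.flags)
    (h2 : G.fverts = H.fverts) (h3 : G.s0 = H.s0) (h4 : G.s1 = H.s1)
    (h5 : G.s2 = H.s2) : G = H := by
  cases G; cases H
  simp only at h1 h2 h3 h4 h5
  subst h1; subst h2; subst h3; subst h4; subst h5
  rfl

lemma pd_flags {G : RibbonGraph F} {A : Finset F} (hA : G.IsEdgeSubset A) :
    (G.partialDual A).flags = G.flags := by
  unfold partialDual; rw [dif_pos hA]

lemma pd_fverts {G : RibbonGraph F} {A : Finset F} (hA : G.IsEdgeSubset A) :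
    (G.partialDual A).fverts = G.fverts := by
  unfold partialDual; rw [dif_pos hA]

lemma pd_s1 {G : RibbonGraph F} {A : Finset F} (hA : G.IsEdgeSubset A) :
    (G.partialDual A).s1 = G.s1 := by
  unfold partialDual; rw [dif_pos hA]

lemma pd_s0_apply {G : RibbonGraph F} {A : Finset F} (hA : G.IsEdgeSubset A) (x : F) :
    (G.partialDual A).s0 x = if x ∈ A then G.s2 x else G.s0 x := by
  unfold partialDual; rw [dif_pos hA]
  exact mix_apply (involutive_mixFun G.inv0 G.inv2 hA.2) x

lemma pd_s2_apply {G : RibbonGraph F} {A : Finset F} (hA : G.IsEdgeSubset A) (x : F) :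
    (G.partialDual A).s2 x = if x ∈ A then G.s0 x else G.s2 x := by
  unfold partialDual; rw [dif_pos hA]
  exact mix_apply (involutive_mixFun G.inv2 G.inv0
    (fun x hx => ⟨(hA.2 x hx).2, (hA.2 x hx).1⟩)) x

lemma ind_flags {G : RibbonGraph F} {A : Finset F} (hA : G.IsEdgeSubset A) :
    (G.induce A).flags = A := by
  unfold induce; rw [dif_pos hA]

lemma ind_fverts {G : RibbonGraph F} {A : Finset F} (hA : G.IsEdgeSubset A) :
    (G.induce A).fverts = ∅ := by
  unfold induce; rw [dif_pos hA]

lemma ind_s1 {G : RibbonGraph F} {A : Finset F} (hA : G.IsEdgeSubset A) :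
    (G.induce A).s1 = indS1 G A := by
  unfold induce; rw [dif_pos hA]

lemma ind_s0_apply {G : RibbonGraph F} {A : Finset F} (hA : G.IsEdgeSubset A) (x : F) :
    (G.induce A).s0 x = if x ∈ A then G.s0 x else x := by
  unfold induce; rw [dif_pos hA]
  have h0 : Function.Involutive (mixFun 1 G.s0 A) :=
    involutive_mixFun (fun _ => rfl) G.inv0 (fun x hx => ⟨by simpa using hx, (hA.2 x hx).1⟩)
  rw [mix_apply h0]
  simp [mixFun]

lemma ind_s2_apply {G : RibbonGraph F} {A : Finset F} (hA : G.IsEdgeSubset A) (x : F) :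
    (G.induce A).s2 x = if x ∈ A then G.s2 x else x := by
  unfold induce; rw [dif_pos hA]
  have h2 : Function.Involutive (mixFun 1 G.s2 A) :=
    involutive_mixFun (fun _ => rfl) G.inv2 (fun x hx => ⟨by simpa using hx, (hA.2 x hx).2⟩)
  rw [mix_apply h2]
  simp [mixFun]

lemma ret_spec {p : Equiv.Perm F} {A : Finset F} {x : F}
    (hex : ∃ k : ℕ, (p ^ k) x ∈ A) :
    ∃ k : ℕ, ret p A x = (p ^ k) x ∧ (p ^ k) x ∈ A ∧ ∀ j < k, (p ^ j) x ∉ A := by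
  unfold ret
  rw [dif_pos hex]
  exact ⟨_, rfl, Nat.find_spec hex, fun j hj => Nat.find_min hex hj⟩

lemma ret_of_mem {p : Equiv.Perm F} {A : Finset F} {x : F} (hx : x ∈ A) :
    ret p A x = x := by
  have hex : ∃ k : ℕ, (p ^ k) x ∈ A := ⟨0, by simpa using hx⟩
  obtain ⟨k, hval, hmem, hmin⟩ := ret_spec hex
  have hk : k = 0 := by
    by_contra hk0
    exact hmin 0 (Nat.pos_of_ne_zero hk0) (by simpa using hx)
  rw [hval, hk]
  simp

lemma ret_walk (G : RibbonGraph F) (Pf Qf : Finset F) (s : Equiv.Perm F) (β : F)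
    (hU : Pf ∪ Qf = G.flags) (hD : Pf ∩ Qf = ∅)
    (hsP : ∀ x ∈ Pf, s x ∈ Pf) (hsQ : ∀ x ∈ Qf, s x ∈ Qf)
    (hsinv : ∀ x, s (s x) = x)
    (hβQ : β ∈ Qf) (hβP : G.s1 β ∈ Pf)
    (hB : ∀ y ∈ Qf, G.s1 y ∈ Pf → y = β) :
    ret (G.s1 * s) Pf β = G.s1 β := by
  classical
  set p : Equiv.Perm F := G.s1 * s with hp
  have hdisj : ∀ {y : F}, y ∈ Pf → y ∈ Qf → False := by
    intro y h1 h2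
    have hmem : y ∈ Pf ∩ Qf := Finset.mem_inter.mpr ⟨h1, h2⟩
    rw [hD] at hmem
    exact absurd hmem (Finset.notMem_empty _)
  have hstep : ∀ z, p z = G.s1 (s z) := fun z => rfl
  have hflag : ∀ z, z ∈ Pf ∪ Qf → p z ∈ Pf ∪ Qf := by
    intro z hz
    have hsz : s z ∈ Pf ∪ Qf := by
      rcases Finset.mem_union.mp hz with h | h
      · exact Finset.mem_union_left _ (hsP _ h)
      · exact Finset.mem_union_right _ (hsQ _ h)
    have : G.s1 (s z) ∈ G.flags := perm_mem_of G.fix1 G.inv1 (hU ▸ hsz)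
    rw [hstep, hU]
    exact this
  have horb : ∀ k : ℕ, (p ^ k) β ∈ Pf ∪ Qf := by
    intro k
    induction k with
    | zero => simpa using Finset.mem_union_right _ hβQ
    | succ n ih =>
      have he : (p ^ (n + 1)) β = p ((p ^ n) β) := by
        rw [pow_succ']; rfl
      rw [he]; exact hflag _ ih
  have hpinv : p⁻¹ β ∈ Pf := by
    have e1 : p⁻¹ β = s (G.s1 β) := by
      have e2 : p (s (G.s1 β)) = β := by
        rw [hstep, hsinv, G.inv1]
      exact p.injective (by rw [show p (p⁻¹ β) = β from p.apply_symm_apply β, e2])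
    rw [e1]; exact hsP _ hβP
  have hex : ∃ k : ℕ, (p ^ k) β ∈ Pf := by
    refine ⟨orderOf p - 1, ?_⟩
    have hm : p ^ orderOf p = 1 := pow_orderOf_eq_one p
    have hm0 : 0 < orderOf p := orderOf_pos p
    have hsplit : p ^ orderOf p = p * p ^ (orderOf p - 1) := by
      rw [← pow_succ', Nat.sub_add_cancel hm0]
    have hinv : p ^ (orderOf p - 1) = p⁻¹ := by
      rw [hm] at hsplit
      exact (eq_inv_of_mul_eq_one_right hsplit.symm)
    rw [hinv]
    exact hpinv
  obtain ⟨k, hval, hkspec, hkmin⟩ := ret_spec hex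
  have hk1 : 1 ≤ k := by
    rcases Nat.eq_zero_or_pos k with h0 | h1
    · exfalso
      rw [h0] at hkspec
      simp only [pow_zero, Equiv.Perm.one_apply] at hkspec
      exact hdisj hkspec hβQ
    · exact h1
  have hw : (p ^ (k - 1)) β ∉ Pf := hkmin _ (by omega)
  have hwQ : (p ^ (k - 1)) β ∈ Qf := by
    rcases Finset.mem_union.mp (horb (k - 1)) with h | h
    · exact absurd h hw
    · exact h
  have hks : (p ^ k) β = G.s1 (s ((p ^ (k - 1)) β)) := by
    have e3 : (p ^ k) β = p ((p ^ (k - 1)) β) := by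
      conv_lhs => rw [show k = (k - 1) + 1 by omega]
      rw [pow_succ']; rfl
    rw [e3, hstep]
  have hmem2 : s ((p ^ (k - 1)) β) ∈ Qf := hsQ _ hwQ
  have heq : s ((p ^ (k - 1)) β) = β := hB _ hmem2 (by rw [← hks]; exact hkspec)
  rw [hval, hks, heq]

lemma indS1fun_eq (G G' : RibbonGraph F) (Pf Qf : Finset F) (β : F)
    (hU : Pf ∪ Qf = G.flags) (hD : Pf ∩ Qf = ∅)
    (hs1 : G'.s1 = G.s1)
    (hs2P : ∀ x ∈ Pf, G'.s2 x ∈ Pf) (hs2Q : ∀ x ∈ Qf, G'.s2 x ∈ Qf)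
    (hβQ : β ∈ Qf) (hβP : G.s1 β ∈ Pf)
    (hB : ∀ y ∈ Qf, G.s1 y ∈ Pf → y = β) :
    indS1fun G' Pf = fun x =>
      if x ∈ Pf then (if G.s1 x ∈ Pf then G.s1 x else G.s1 β) else x := by
  funext x
  unfold indS1fun
  by_cases hx : x ∈ Pf
  · rw [if_pos hx, if_pos hx, hs1]
    by_cases h1 : G.s1 x ∈ Pf
    · rw [if_pos h1]
      exact ret_of_mem h1
    · rw [if_neg h1]
      have hxf : G.s1 x ∈ Qf := by
        have : G.s1 x ∈ G.flags := perm_mem_of G.fix1 G.inv1 (hU ▸ Finset.mem_union_left _ hx)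
        rw [← hU] at this
        rcases Finset.mem_union.mp this with h | h
        · exact absurd h h1
        · exact h
      have hxβ : G.s1 x = β := hB _ hxf (by rw [G.inv1]; exact hx)
      rw [hxβ]
      exact ret_walk G Pf Qf G'.s2 β hU hD hs2P hs2Q G'.inv2 hβQ hβP hB
  · rw [if_neg hx, if_neg hx]

lemma mem_orbitOf_self (gens : Set (Equiv.Perm F)) (x : F) : x ∈ orbitOf gens x :=
  Relation.EqvGen.refl x

lemma orbit_closed {gens : Set (Equiv.Perm F)} {g : Equiv.Perm F} (hg : g ∈ gens)
    {x y : F} (hy : y ∈ orbitOf gens x) : g y ∈ orbitOf gens x :=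
  Relation.EqvGen.trans _ _ _ hy (Relation.EqvGen.rel _ _ ⟨g, hg, rfl⟩)

lemma orbitOf_eq_of {gens : Set (Equiv.Perm F)} {x y : F}
    (h : Relation.EqvGen (permRel gens) x y) :
    orbitOf gens x = orbitOf gens y := by
  ext z
  constructor
  · intro hz
    exact Relation.EqvGen.trans _ _ _ (Relation.EqvGen.symm _ _ h) hz
  · intro hz
    exact Relation.EqvGen.trans _ _ _ h hz

lemma eqvGen_trans_of {r q : F → F → Prop}
    (h : ∀ a b, r a b → Relation.EqvGen q a b) :
    ∀ {a b : F}, Relation.EqvGen r a b → Relation.EqvGen q a b := by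
  intro a b hab
  induction hab with
  | rel a b hab => exact h _ _ hab
  | refl a => exact Relation.EqvGen.refl a
  | symm a b _ ih => exact Relation.EqvGen.symm _ _ ih
  | trans a b c _ _ ih1 ih2 => exact Relation.EqvGen.trans _ _ _ ih1 ih2

lemma chain_cross_ex (G : RibbonGraph F) (Pf Qf : Finset F) (s : Equiv.Perm F)
    (hU : Pf ∪ Qf = G.flags) (hD : Pf ∩ Qf = ∅)
    (hsP : ∀ x ∈ Pf, s x ∈ Pf) (hsQ : ∀ x ∈ Qf, s x ∈ Qf)
    (hsF : ∀ x, x ∉ G.flags → s x = x)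
    {u w : F} (h : Relation.EqvGen (permRel {G.s1, s}) u w) :
    (u ∈ Pf ↔ w ∈ Pf) ∨ ∃ y, y ∈ Qf ∧ G.s1 y ∈ Pf := by
  have hdisj : ∀ {y : F}, y ∈ Pf → y ∈ Qf → False := by
    intro y h1 h2
    have hmem : y ∈ Pf ∩ Qf := Finset.mem_inter.mpr ⟨h1, h2⟩
    rw [hD] at hmem
    exact absurd hmem (Finset.notMem_empty _)
  have hflag : ∀ {z : F}, z ∈ Pf ∪ Qf → G.s1 z ∈ Pf ∪ Qf := by
    intro z hz
    have : G.s1 z ∈ G.flags := perm_mem_of G.fix1 G.inv1 (hU ▸ hz)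
    rw [hU]; exact this
  induction h with
  | rel a b hab =>
    obtain ⟨g, hg, rfl⟩ := hab
    simp only [Set.mem_insert_iff, Set.mem_singleton_iff] at hg
    rcases hg with rfl | rfl
    · by_cases haP : a ∈ Pf
      · by_cases hbP : G.s1 a ∈ Pf
        · exact Or.inl (iff_of_true haP hbP)
        · have hbQ : G.s1 a ∈ Qf := by
            rcases Finset.mem_union.mp (hflag (Finset.mem_union_left _ haP)) with h | h
            · exact absurd h hbP
            · exact h
          exact Or.inr ⟨G.s1 a, hbQ, by rw [G.inv1]; exact haP⟩
      · by_cases haQ : a ∈ Qf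
        · by_cases hbP : G.s1 a ∈ Pf
          · exact Or.inr ⟨a, haQ, hbP⟩
          · exact Or.inl (iff_of_false haP hbP)
        · have haF : a ∉ G.flags := by
            rw [← hU]
            simp [haP, haQ]
          left
          rw [G.fix1 _ haF]
    · left
      by_cases haP : a ∈ Pf
      · exact iff_of_true haP (hsP _ haP)
      · by_cases haQ : a ∈ Qf
        · exact iff_of_false haP (fun hc => hdisj hc (hsQ _ haQ))
        · have haF : a ∉ G.flags := by
            rw [← hU]
            simp [haP, haQ]
          rw [hsF _ haF]
  | refl a => exact Or.inl Iff.rfl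
  | symm a b hab ih =>
    rcases ih with hiff | hr
    · exact Or.inl hiff.symm
    · exact Or.inr hr
  | trans a b c hab hbc ih1 ih2 =>
    rcases ih1 with h1 | h1
    · rcases ih2 with h2 | h2
      · exact Or.inl (h1.trans h2)
      · exact Or.inr h2
    · exact Or.inr h1

lemma chain_cross (G : RibbonGraph F) (Pf Qf : Finset F) (s : Equiv.Perm F) (β : F)
    (hU : Pf ∪ Qf = G.flags) (hD : Pf ∩ Qf = ∅)
    (hsP : ∀ x ∈ Pf, s x ∈ Pf) (hsQ : ∀ x ∈ Qf, s x ∈ Qf)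
    (hsF : ∀ x, x ∉ G.flags → s x = x)
    (hβQ : β ∈ Qf) (hB : ∀ y ∈ Qf, G.s1 y ∈ Pf → y = β)
    {u w : F} (h : Relation.EqvGen (permRel {G.s1, s}) u w) :
    (u ∈ Pf ↔ w ∈ Pf) ∨ Relation.EqvGen (permRel {G.s1, s}) u (G.s1 β) := by
  have hdisj : ∀ {y : F}, y ∈ Pf → y ∈ Qf → False := by
    intro y h1 h2
    have hmem : y ∈ Pf ∩ Qf := Finset.mem_inter.mpr ⟨h1, h2⟩
    rw [hD] at hmem
    exact absurd hmem (Finset.notMem_empty _)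
  have hflag : ∀ {z : F}, z ∈ Pf ∪ Qf → G.s1 z ∈ Pf ∪ Qf := by
    intro z hz
    have : G.s1 z ∈ G.flags := perm_mem_of G.fix1 G.inv1 (hU ▸ hz)
    rw [hU]; exact this
  induction h with
  | rel a b hab =>
    obtain ⟨g, hg, rfl⟩ := hab
    simp only [Set.mem_insert_iff, Set.mem_singleton_iff] at hg
    rcases hg with rfl | rfl
    · by_cases haP : a ∈ Pf
      · by_cases hbP : G.s1 a ∈ Pf
        · exact Or.inl (iff_of_true haP hbP)
        · have hbQ : G.s1 a ∈ Qf := by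
            rcases Finset.mem_union.mp (hflag (Finset.mem_union_left _ haP)) with h | h
            · exact absurd h hbP
            · exact h
          have hba : G.s1 a = β := hB _ hbQ (by rw [G.inv1]; exact haP)
          have ha : a = G.s1 β := by rw [← hba, G.inv1]
          exact Or.inr (ha ▸ Relation.EqvGen.refl a)
      · by_cases haQ : a ∈ Qf
        · by_cases hbP : G.s1 a ∈ Pf
          · have ha : a = β := hB _ haQ hbP
            subst ha
            exact Or.inr (Relation.EqvGen.rel _ _ ⟨G.s1, by simp, rfl⟩)
          · have hbQ : G.s1 a ∈ Qf := by
              rcases Finset.mem_union.mp (hflag (Finset.mem_union_right _ haQ)) with h | h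
              · exact absurd h hbP
              · exact h
            exact Or.inl (iff_of_false haP hbP)
        · have haF : a ∉ G.flags := by
            rw [← hU]
            simp [haP, haQ]
          left
          rw [G.fix1 _ haF]
    · left
      by_cases haP : a ∈ Pf
      · exact iff_of_true haP (hsP _ haP)
      · by_cases haQ : a ∈ Qf
        · exact iff_of_false haP (fun hc => hdisj hc (hsQ _ haQ))
        · have haF : a ∉ G.flags := by
            rw [← hU]
            simp [haP, haQ]
          rw [hsF _ haF]
  | refl a => exact Or.inl Iff.rfl
  | symm a b hab ih =>
    rcases ih with hiff | hr
    · exact Or.inl hiff.symm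
    · exact Or.inr (Relation.EqvGen.trans _ _ _ (Relation.EqvGen.symm _ _ hab) hr)
  | trans a b c hab hbc ih1 ih2 =>
    rcases ih1 with h1 | h1
    · rcases ih2 with h2 | h2
      · exact Or.inl (h1.trans h2)
      · exact Or.inr (Relation.EqvGen.trans _ _ _ hab h2)
    · exact Or.inr h1

lemma orbitOf_pd {G : RibbonGraph F} {A : Finset F} (hA : G.IsEdgeSubset A) :
    orbitOf {(G.partialDual A).s0, (G.partialDual A).s1, (G.partialDual A).s2} =
      orbitOf {G.s0, G.s1, G.s2} := by
  funext x
  ext y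
  constructor
  · apply eqvGen_trans_of
    rintro a b ⟨g, hg, rfl⟩
    simp only [Set.mem_insert_iff, Set.mem_singleton_iff] at hg
    rcases hg with rfl | rfl | rfl
    · rw [pd_s0_apply hA]
      by_cases ha : a ∈ A
      · rw [if_pos ha]
        exact Relation.EqvGen.rel _ _ ⟨G.s2, by simp, rfl⟩
      · rw [if_neg ha]
        exact Relation.EqvGen.rel _ _ ⟨G.s0, by simp, rfl⟩
    · rw [pd_s1 hA]
      exact Relation.EqvGen.rel _ _ ⟨G.s1, by simp, rfl⟩
    · rw [pd_s2_apply hA]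
      by_cases ha : a ∈ A
      · rw [if_pos ha]
        exact Relation.EqvGen.rel _ _ ⟨G.s0, by simp, rfl⟩
      · rw [if_neg ha]
        exact Relation.EqvGen.rel _ _ ⟨G.s2, by simp, rfl⟩
  · apply eqvGen_trans_of
    rintro a b ⟨g, hg, rfl⟩
    simp only [Set.mem_insert_iff, Set.mem_singleton_iff] at hg
    rcases hg with rfl | rfl | rfl
    · by_cases ha : a ∈ A
      · exact Relation.EqvGen.rel _ _
          ⟨(G.partialDual A).s2, by simp, by rw [pd_s2_apply hA, if_pos ha]⟩
      · exact Relation.EqvGen.rel _ _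
          ⟨(G.partialDual A).s0, by simp, by rw [pd_s0_apply hA, if_neg ha]⟩
    · exact Relation.EqvGen.rel _ _ ⟨(G.partialDual A).s1, by simp, by rw [pd_s1 hA]⟩
    · by_cases ha : a ∈ A
      · exact Relation.EqvGen.rel _ _
          ⟨(G.partialDual A).s0, by simp, by rw [pd_s0_apply hA, if_pos ha]⟩
      · exact Relation.EqvGen.rel _ _
          ⟨(G.partialDual A).s2, by simp, by rw [pd_s2_apply hA, if_neg ha]⟩

lemma numComponents_pd {G : RibbonGraph F} {A : Finset F} (hA : G.IsEdgeSubset A) :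
    (G.partialDual A).numComponents = G.numComponents := by
  unfold numComponents countOrbits
  rw [orbitOf_pd hA, pd_flags hA, pd_fverts hA]

/-- **Lemma 5.8(1).** The partial dual distributes over a join:
`(P ∨ Q)^A = P^(E(P) ∩ A) ∨ Q^(E(Q) ∩ A)`. -/
theorem partialDual_join (G P Q : RibbonGraph F) (A : Finset F)
    (h : IsJoin G P Q) (hA : G.IsEdgeSubset A) :
    IsJoin (G.partialDual A)
      (P.partialDual (P.flags ∩ A)) (Q.partialDual (Q.flags ∩ A)) := by
  classical
  obtain ⟨hsum, v0, hv0, harc⟩ := h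
  obtain ⟨⟨hPE, hPI⟩, ⟨hQE, hQI⟩, hPc, hQc, hPne, hQne, hUn, hIn, hcard⟩ := hsum
  have hdisj : ∀ {y : F}, y ∈ P.flags → y ∈ Q.flags → False := by
    intro y h1 h2
    have hmem : y ∈ P.flags ∩ Q.flags := Finset.mem_inter.mpr ⟨h1, h2⟩
    rw [hIn] at hmem
    exact absurd hmem (Finset.notMem_empty _)
  have hPflsub : P.flags ⊆ G.flags := hPE.1
  have hQflsub : Q.flags ⊆ G.flags := hQE.1
  have hQofNotP : ∀ {x : F}, x ∈ G.flags → x ∉ P.flags → x ∈ Q.flags := by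
    intro x hx hnp
    rw [← hUn] at hx
    rcases Finset.mem_union.mp hx with h | h
    · exact absurd h hnp
    · exact h
  -- the shared vertex is unique
  have hshared_eq : ∀ w ∈ G.sharedVerts P Q, w = v0 := by
    obtain ⟨a, ha⟩ := Set.ncard_eq_one.mp hcard
    intro w hw
    rw [ha, Set.mem_singleton_iff] at hw
    have hv0' : v0 = a := by
      have := hv0
      rw [ha, Set.mem_singleton_iff] at this
      exact this
    rw [hw, hv0']
  obtain ⟨⟨y0, hy0fl, hveq⟩, ⟨pp, hppv, hppP⟩, ⟨qq, hqqv, hqqQ⟩⟩ := hv0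
  -- B := flags of Q whose s1-image is in P; first, B is nonempty
  have hppE : Relation.EqvGen (permRel {G.s1, G.s2}) y0 pp := by
    have := hppv; rw [hveq] at this; exact this
  have hqqE : Relation.EqvGen (permRel {G.s1, G.s2}) y0 qq := by
    have := hqqv; rw [hveq] at this; exact this
  have hBne : ∃ y, y ∈ Q.flags ∧ G.s1 y ∈ P.flags := by
    have hcr := chain_cross_ex G P.flags Q.flags G.s2 hUn hIn
      (fun x hx => (hPE.2 x hx).2) (fun x hx => (hQE.2 x hx).2) G.fix2
      (Relation.EqvGen.trans _ _ _ (Relation.EqvGen.symm _ _ hppE) hqqE)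
    rcases hcr with hiff | hex
    · exact absurd (hiff.mp (Finset.mem_coe.mp hppP))
        (fun hc => hdisj hc (Finset.mem_coe.mp hqqQ))
    · exact hex
  -- the counting argument: B has at most one element
  have hvc1 : ∀ {z : F}, z ∈ v0 → G.s1 z ∈ v0 := by
    intro z hz
    rw [hveq] at hz ⊢
    exact orbit_closed (by simp) hz
  have hvc2 : ∀ {z : F}, z ∈ v0 → G.s2 z ∈ v0 := by
    intro z hz
    rw [hveq] at hz ⊢
    exact orbit_closed (by simp) hz
  have hBmemv : ∀ y, y ∈ Q.flags → G.s1 y ∈ P.flags → y ∈ v0 := by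
    intro y hyQ hyP
    have hsh : G.vertexOrbit y ∈ G.sharedVerts P Q := by
      refine ⟨⟨y, hQflsub hyQ, rfl⟩, ⟨G.s1 y, ?_, Finset.mem_coe.mpr hyP⟩,
        ⟨y, mem_orbitOf_self _ y, Finset.mem_coe.mpr hyQ⟩⟩
      exact orbit_closed (by simp) (mem_orbitOf_self _ y)
    have heq := hshared_eq _ hsh
    rw [← heq]
    exact mem_orbitOf_self _ y
  have hBcard : ∀ y z, y ∈ Q.flags → G.s1 y ∈ P.flags →
      z ∈ Q.flags → G.s1 z ∈ P.flags → y = z := by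
    set σ : Equiv.Perm F := G.s2 * G.s1 with hσ
    set u : Set F := v0 ∩ ↑P.flags with hu
    have hpre : (⇑σ ⁻¹' u).ncard = u.ncard :=
      Set.ncard_preimage_of_injective_subset_range σ.injective
        (by rw [σ.surjective.range_eq]; exact Set.subset_univ u)
    have h1 := Set.ncard_inter_add_ncard_diff_eq_ncard u (⇑σ ⁻¹' u)
    have h2 := Set.ncard_inter_add_ncard_diff_eq_ncard (⇑σ ⁻¹' u) u
    rw [Set.inter_comm] at h2
    have hdiffs : (u \ ⇑σ ⁻¹' u).ncard = (⇑σ ⁻¹' u \ u).ncard := by omega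
    have hEid : {x : F | x ∈ v0 ∩ ↑P.flags ∧ σ x ∉ v0 ∩ ↑P.flags} = u \ ⇑σ ⁻¹' u := by
      ext x
      simp only [Set.mem_setOf_eq, Set.mem_diff, Set.mem_preimage, hu]
    have hsub : {w : F | w ∈ Q.flags ∧ G.s1 w ∈ P.flags} ⊆ ⇑σ ⁻¹' u \ u := by
      rintro w ⟨hw1, hw2⟩
      have hwv : w ∈ v0 := hBmemv w hw1 hw2
      constructor
      · show σ w ∈ u
        have hσw : σ w = G.s2 (G.s1 w) := rfl
        constructor
        · rw [hσw]; exact hvc2 (hvc1 hwv)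
        · rw [hσw]; exact Finset.mem_coe.mpr ((hPE.2 _ hw2).2)
      · intro hc
        exact hdisj (Finset.mem_coe.mp hc.2) hw1
    have hle : ({w : F | w ∈ Q.flags ∧ G.s1 w ∈ P.flags}).ncard ≤ 1 := by
      calc ({w : F | w ∈ Q.flags ∧ G.s1 w ∈ P.flags}).ncard
          ≤ (⇑σ ⁻¹' u \ u).ncard := Set.ncard_le_ncard hsub (Set.toFinite _)
        _ = (u \ ⇑σ ⁻¹' u).ncard := hdiffs.symm
        _ ≤ 1 := by rw [← hEid]; exact harc
    intro y z hy1 hy2 hz1 hz2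
    exact (Set.ncard_le_one (Set.toFinite _)).mp hle y ⟨hy1, hy2⟩ z ⟨hz1, hz2⟩
  obtain ⟨β, hβQ, hβP⟩ := hBne
  have hB : ∀ y ∈ Q.flags, G.s1 y ∈ P.flags → y = β :=
    fun y h1 h2 => hBcard y β h1 h2 hβQ hβP
  have hx0P : G.s1 β ∈ P.flags := hβP
  have hs1x0 : G.s1 (G.s1 β) = β := G.inv1 β
  have hBQ : ∀ y ∈ P.flags, G.s1 y ∈ Q.flags → y = G.s1 β := by
    intro y h1 h2
    have := hB _ h2 (by rw [G.inv1]; exact h1)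
    rw [← this, G.inv1]
  -- field equations for P and Q
  have hPs0 : ∀ x, P.s0 x = if x ∈ P.flags then G.s0 x else x := by
    intro x
    conv_lhs => rw [hPI]
    rw [ind_s0_apply hPE]
  have hPs2 : ∀ x, P.s2 x = if x ∈ P.flags then G.s2 x else x := by
    intro x
    conv_lhs => rw [hPI]
    rw [ind_s2_apply hPE]
  have hPs1 : P.s1 = indS1 G P.flags := by
    conv_lhs => rw [hPI]
    rw [ind_s1 hPE]
  have hPfv : P.fverts = ∅ := by
    conv_lhs => rw [hPI]
    rw [ind_fverts hPE]
  have hQs0 : ∀ x, Q.s0 x = if x ∈ Q.flags then G.s0 x else x := by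
    intro x
    conv_lhs => rw [hQI]
    rw [ind_s0_apply hQE]
  have hQs2 : ∀ x, Q.s2 x = if x ∈ Q.flags then G.s2 x else x := by
    intro x
    conv_lhs => rw [hQI]
    rw [ind_s2_apply hQE]
  have hQs1 : Q.s1 = indS1 G Q.flags := by
    conv_lhs => rw [hQI]
    rw [ind_s1 hQE]
  have hQfv : Q.fverts = ∅ := by
    conv_lhs => rw [hQI]
    rw [ind_fverts hQE]
  -- edge subsets
  have hPeA : P.IsEdgeSubset (P.flags ∩ A) := by
    constructor
    · exact Finset.inter_subset_left
    · intro x hx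
      obtain ⟨hx1, hx2⟩ := Finset.mem_inter.mp hx
      constructor
      · rw [hPs0, if_pos hx1]
        exact Finset.mem_inter.mpr ⟨(hPE.2 x hx1).1, (hA.2 x hx2).1⟩
      · rw [hPs2, if_pos hx1]
        exact Finset.mem_inter.mpr ⟨(hPE.2 x hx1).2, (hA.2 x hx2).2⟩
  have hQeA : Q.IsEdgeSubset (Q.flags ∩ A) := by
    constructor
    · exact Finset.inter_subset_left
    · intro x hx
      obtain ⟨hx1, hx2⟩ := Finset.mem_inter.mp hx
      constructor
      · rw [hQs0, if_pos hx1]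
        exact Finset.mem_inter.mpr ⟨(hQE.2 x hx1).1, (hA.2 x hx2).1⟩
      · rw [hQs2, if_pos hx1]
        exact Finset.mem_inter.mpr ⟨(hQE.2 x hx1).2, (hA.2 x hx2).2⟩
  have hGAP : (G.partialDual A).IsEdgeSubset P.flags := by
    constructor
    · rw [pd_flags hA]; exact hPflsub
    · intro x hx
      constructor
      · rw [pd_s0_apply hA]
        split
        · exact (hPE.2 x hx).2
        · exact (hPE.2 x hx).1
      · rw [pd_s2_apply hA]
        split
        · exact (hPE.2 x hx).1
        · exact (hPE.2 x hx).2
  have hGAQ : (G.partialDual A).IsEdgeSubset Q.flags := by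
    constructor
    · rw [pd_flags hA]; exact hQflsub
    · intro x hx
      constructor
      · rw [pd_s0_apply hA]
        split
        · exact (hQE.2 x hx).2
        · exact (hQE.2 x hx).1
      · rw [pd_s2_apply hA]
        split
        · exact (hQE.2 x hx).1
        · exact (hQE.2 x hx).2
  have hGAs2P : ∀ x ∈ P.flags, (G.partialDual A).s2 x ∈ P.flags := fun x hx => (hGAP.2 x hx).2
  have hGAs2Q : ∀ x ∈ Q.flags, (G.partialDual A).s2 x ∈ Q.flags := fun x hx => (hGAQ.2 x hx).2
  have hUn' : Q.flags ∪ P.flags = G.flags := by rw [Finset.union_comm]; exact hUn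
  have hIn' : Q.flags ∩ P.flags = ∅ := by rw [Finset.inter_comm]; exact hIn
  -- indS1 is unchanged by partial duality
  have hindP : indS1 (G.partialDual A) P.flags = indS1 G P.flags := by
    have h1 := indS1fun_eq G (G.partialDual A) P.flags Q.flags β hUn hIn (pd_s1 hA)
      hGAs2P hGAs2Q hβQ hβP hB
    have h2 := indS1fun_eq G G P.flags Q.flags β hUn hIn rfl
      (fun x hx => (hPE.2 x hx).2) (fun x hx => (hQE.2 x hx).2) hβQ hβP hB
    unfold indS1
    rw [h1, h2]
  have hindQ : indS1 (G.partialDual A) Q.flags = indS1 G Q.flags := by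
    have h1 := indS1fun_eq G (G.partialDual A) Q.flags P.flags (G.s1 β) hUn' hIn' (pd_s1 hA)
      hGAs2Q hGAs2P hx0P (by rw [hs1x0]; exact hβQ) hBQ
    have h2 := indS1fun_eq G G Q.flags P.flags (G.s1 β) hUn' hIn' rfl
      (fun x hx => (hQE.2 x hx).2) (fun x hx => (hPE.2 x hx).2)
      hx0P (by rw [hs1x0]; exact hβQ) hBQ
    unfold indS1
    rw [h1, h2]
  -- the two structure identities
  have hPD : P.partialDual (P.flags ∩ A) = (G.partialDual A).induce P.flags := by
    apply rg_ext
    · rw [pd_flags hPeA, ind_flags hGAP]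
    · rw [pd_fverts hPeA, ind_fverts hGAP, hPfv]
    · apply Equiv.ext; intro x
      rw [pd_s0_apply hPeA, ind_s0_apply hGAP, pd_s0_apply hA, hPs0, hPs2]
      by_cases h1 : x ∈ P.flags <;> by_cases h2 : x ∈ A <;>
        simp [Finset.mem_inter, h1, h2]
    · rw [pd_s1 hPeA, hPs1, ind_s1 hGAP, hindP]
    · apply Equiv.ext; intro x
      rw [pd_s2_apply hPeA, ind_s2_apply hGAP, pd_s2_apply hA, hPs0, hPs2]
      by_cases h1 : x ∈ P.flags <;> by_cases h2 : x ∈ A <;>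
        simp [Finset.mem_inter, h1, h2]
  have hQD : Q.partialDual (Q.flags ∩ A) = (G.partialDual A).induce Q.flags := by
    apply rg_ext
    · rw [pd_flags hQeA, ind_flags hGAQ]
    · rw [pd_fverts hQeA, ind_fverts hGAQ, hQfv]
    · apply Equiv.ext; intro x
      rw [pd_s0_apply hQeA, ind_s0_apply hGAQ, pd_s0_apply hA, hQs0, hQs2]
      by_cases h1 : x ∈ Q.flags <;> by_cases h2 : x ∈ A <;>
        simp [Finset.mem_inter, h1, h2]
    · rw [pd_s1 hQeA, hQs1, ind_s1 hGAQ, hindQ]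
    · apply Equiv.ext; intro x
      rw [pd_s2_apply hQeA, ind_s2_apply hGAQ, pd_s2_apply hA, hQs0, hQs2]
      by_cases h1 : x ∈ Q.flags <;> by_cases h2 : x ∈ A <;>
        simp [Finset.mem_inter, h1, h2]
  -- the shared vertex of the dual
  have hgensA : ({(G.partialDual A).s1, (G.partialDual A).s2} : Set (Equiv.Perm F)) =
      {G.s1, (G.partialDual A).s2} := by rw [pd_s1 hA]
  have hGAs2F : ∀ x, x ∉ G.flags → (G.partialDual A).s2 x = x := by
    intro x hx
    exact (G.partialDual A).fix2 x (by rw [pd_flags hA]; exact hx)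
  have hSV : (G.partialDual A).sharedVerts (P.partialDual (P.flags ∩ A))
      (Q.partialDual (Q.flags ∩ A)) = {(G.partialDual A).vertexOrbit (G.s1 β)} := by
    ext w
    simp only [sharedVerts, Set.mem_setOf_eq, Set.mem_singleton_iff,
      pd_flags hPeA, pd_flags hQeA]
    constructor
    · rintro ⟨⟨y, hyfl, rfl⟩, ⟨p1, hp1v, hp1P⟩, ⟨q1, hq1v, hq1Q⟩⟩
      have hp1E : Relation.EqvGen (permRel {G.s1, (G.partialDual A).s2}) y p1 := by
        have : p1 ∈ orbitOf {(G.partialDual A).s1, (G.partialDual A).s2} y := hp1v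
        rw [hgensA] at this
        exact this
      have hq1E : Relation.EqvGen (permRel {G.s1, (G.partialDual A).s2}) y q1 := by
        have : q1 ∈ orbitOf {(G.partialDual A).s1, (G.partialDual A).s2} y := hq1v
        rw [hgensA] at this
        exact this
      have hcr := chain_cross G P.flags Q.flags (G.partialDual A).s2 β hUn hIn
        hGAs2P hGAs2Q hGAs2F hβQ hB
        (Relation.EqvGen.trans _ _ _ (Relation.EqvGen.symm _ _ hp1E) hq1E)
      have hpx0 : Relation.EqvGen (permRel {G.s1, (G.partialDual A).s2}) p1 (G.s1 β) := by
        rcases hcr with hiff | hr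
        · exact absurd (hiff.mp (Finset.mem_coe.mp hp1P))
            (fun hc => hdisj hc (Finset.mem_coe.mp hq1Q))
        · exact hr
      have hyx0 : Relation.EqvGen (permRel {G.s1, (G.partialDual A).s2}) y (G.s1 β) :=
        Relation.EqvGen.trans _ _ _ hp1E hpx0
      show orbitOf {(G.partialDual A).s1, (G.partialDual A).s2} y =
        orbitOf {(G.partialDual A).s1, (G.partialDual A).s2} (G.s1 β)
      rw [hgensA]
      exact orbitOf_eq_of hyx0
    · rintro rfl
      refine ⟨⟨G.s1 β, by rw [pd_flags hA]; exact hPflsub hx0P, rfl⟩,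
        ⟨G.s1 β, mem_orbitOf_self _ _, Finset.mem_coe.mpr hx0P⟩,
        ⟨β, ?_, Finset.mem_coe.mpr hβQ⟩⟩
      exact Relation.EqvGen.rel _ _ ⟨(G.partialDual A).s1, by simp,
        by rw [pd_s1 hA]; exact hs1x0⟩
  refine ⟨⟨⟨?_, ?_⟩, ⟨?_, ?_⟩, ?_, ?_, ?_, ?_, ?_, ?_, ?_⟩,
    (G.partialDual A).vertexOrbit (G.s1 β), ?_, ?_⟩
  · rw [pd_flags hPeA]; exact hGAP
  · rw [pd_flags hPeA]; exact hPD
  · rw [pd_flags hQeA]; exact hGAQ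
  · rw [pd_flags hQeA]; exact hQD
  · show (P.partialDual (P.flags ∩ A)).numComponents = 1
    rw [numComponents_pd hPeA]
    exact hPc
  · show (Q.partialDual (Q.flags ∩ A)).numComponents = 1
    rw [numComponents_pd hQeA]
    exact hQc
  · rw [pd_flags hPeA]; exact hPne
  · rw [pd_flags hQeA]; exact hQne
  · rw [pd_flags hPeA, pd_flags hQeA, pd_flags hA]; exact hUn
  · rw [pd_flags hPeA, pd_flags hQeA]; exact hIn
  · rw [hSV]; exact Set.ncard_singleton _
  · rw [hSV]; exact Set.mem_singleton _
  · -- the arc condition at the new shared vertex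
    have hset : {x : F | x ∈ (G.partialDual A).vertexOrbit (G.s1 β) ∩
          ↑(P.partialDual (P.flags ∩ A)).flags ∧
        ((G.partialDual A).s2 * (G.partialDual A).s1) x ∉
          (G.partialDual A).vertexOrbit (G.s1 β) ∩ ↑(P.partialDual (P.flags ∩ A)).flags} =
        {G.s1 β} := by
      ext x
      simp only [Set.mem_setOf_eq, Set.mem_singleton_iff, pd_flags hPeA,
        Equiv.Perm.mul_apply]
      constructor
      · rintro ⟨⟨hxv, hxP⟩, hnot⟩
        have hσv : (G.partialDual A).s2 ((G.partialDual A).s1 x) ∈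
            (G.partialDual A).vertexOrbit (G.s1 β) :=
          orbit_closed (by simp) (orbit_closed (by simp) hxv)
        have hnP : (G.partialDual A).s2 ((G.partialDual A).s1 x) ∉ ↑P.flags :=
          fun hc => hnot ⟨hσv, hc⟩
        rw [pd_s1 hA] at hnP
        by_cases hs1P : G.s1 x ∈ P.flags
        · exact absurd (Finset.mem_coe.mpr (hGAs2P _ hs1P)) hnP
        · have hs1Q : G.s1 x ∈ Q.flags :=
            hQofNotP (perm_mem_of G.fix1 G.inv1 (hPflsub (Finset.mem_coe.mp hxP))) hs1P
          have hxβ : G.s1 x = β := hB _ hs1Q (by rw [G.inv1]; exact Finset.mem_coe.mp hxP)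
          rw [← G.inv1 x, hxβ]
      · rintro rfl
        refine ⟨⟨mem_orbitOf_self _ _, Finset.mem_coe.mpr hx0P⟩, ?_⟩
        rintro ⟨-, hc⟩
        rw [pd_s1 hA, hs1x0] at hc
        exact hdisj (Finset.mem_coe.mp hc) (hGAs2Q _ hβQ)
    rw [hset, Set.ncard_singleton]

end RibbonGraph

end RibbonPaper
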